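/- Let G be a 2-connected K_{1,4}-free split graph with Δ^I = 2 that contains a short cycle D. Then G is not Hamiltonian; indeed, deleting S = V(D) ∩ K leaves more than |S| connected components. -/

import Mathlib

open SimpleGraph

variable {V : Type*}

/-- `I` is an independent set in `G`. -/
def IndepOn (G : SimpleGraph V) (I : Set V) : Prop :=
  ∀ ⦃u⦄, u ∈ I → ∀ ⦃v⦄, v ∈ I → ¬ G.Adj u v

/-- `(K, I)` is a split partition of `G`: `K` a clique, `I` independent,
partitioning the vertex set. -/
def SplitPartition (G : SimpleGraph V) (K I : Set V) : Prop :=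
  Disjoint K I ∧ K ∪ I = Set.univ ∧ G.IsClique K ∧ IndepOn G I

/-- `K` is a maximum clique of `G`. -/
def MaxClique (G : SimpleGraph V) (K : Set V) : Prop :=
  G.IsClique K ∧ ∀ K' : Set V, G.IsClique K' → K'.ncard ≤ K.ncard

/-- `G` has no induced copy of the star `K_{1,n}` (center plus `n` pairwise
nonadjacent leaves). -/
def StarFree (G : SimpleGraph V) (n : ℕ) : Prop :=
  ¬ ∃ (c : V) (L : Finset V), L.card = n ∧ c ∉ L ∧ (∀ l ∈ L, G.Adj c l) ∧
      (∀ l ∈ L, ∀ m ∈ L, l ≠ m → ¬ G.Adj l m)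

/-- `G` is 2-connected: at least 3 vertices and deleting any single vertex
leaves a connected graph. -/
def TwoConnected (G : SimpleGraph V) [Fintype V] : Prop :=
  3 ≤ Fintype.card V ∧ ∀ v : V, (G.induce (({v} : Set V)ᶜ)).Connected

/-- `G` has a Hamiltonian cycle (a spanning cycle). -/
def HasHamCycle (G : SimpleGraph V) : Prop :=
  letI := Classical.decEq V
  ∃ (a : V) (p : G.Walk a a), p.IsHamiltonianCycle

/-- The bipartite subgraph `H` of `G` on `V_a = {u ∈ I : deg u = 2}` and
`V_b = N(V_a)`: its edges are exactly the edges of `G` incident to a degree-2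
vertex of `I`. -/
def shortSub (G : SimpleGraph V) (I : Set V) : SimpleGraph V where
  Adj x y := G.Adj x y ∧
    ((x ∈ I ∧ (G.neighborSet x).ncard = 2) ∨ (y ∈ I ∧ (G.neighborSet y).ncard = 2))
  symm := ⟨fun x y h => ⟨h.1.symm, h.2.symm⟩⟩
  loopless := ⟨fun x h => G.irrefl h.1⟩

/-- `G` has a short cycle: an induced cycle in the bipartite subgraph
`shortSub G I` missing at least one vertex of `K`. -/
def HasShortCycle (G : SimpleGraph V) (K I : Set V) : Prop :=
  ∃ (n : ℕ) (f : cycleGraph n ↪g shortSub G I), 3 ≤ n ∧ ∃ k ∈ K, k ∉ Set.range ⇑f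


lemma fin_succ_ne_pred (m : ℕ) (i : Fin (m+3)) : i + 1 ≠ i - 1 := by
  intro h
  have h2 : (i+1) - (i-1) = 0 := by rw [h]; open Fin.CommRing in ring
  have h3 : (i+1) - (i-1) = 2 := by open Fin.CommRing in ring
  rw [h3] at h2
  have := congrArg Fin.val h2
  simp [Nat.mod_eq_of_lt (show 2 < m + 3 by omega)] at this

lemma ham_comp_le {V : Type*} [Fintype V] [DecidableEq V] {G : SimpleGraph V} {a : V}
    {p : G.Walk a a}
    (hp : p.IsHamiltonianCycle) (S : Set V) (hS : S.Nonempty) :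
    Nat.card ((G.induce (Sᶜ : Set V)).ConnectedComponent) ≤ S.ncard := by
  classical
  obtain ⟨s, hsS⟩ := hS
  have hs' : s ∈ p.support := hp.mem_support s
  set q := p.rotate s hs' with hq_def
  have hqc : q.IsCycle := hp.isCycle.rotate hs'
  set l : List V := q.support.tail with hl_def
  have hrot : q.support.tail ~r p.support.tail := p.support_rotate s hs'
  have hmem : ∀ v : V, v ∈ l := by
    intro v
    have hv : v ∈ p.support.tail := by
      have := hp.isHamiltonian_tail.mem_support v
      rw [← Walk.cons_support_tail hp.1.not_nil, List.tail_cons]; exact this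
    exact hrot.mem_iff.mpr hv
  have hnodup : l.Nodup := hqc.support_nodup
  set n := l.length with hn_def
  have hgeq : ∀ i j (hi : i < n) (hj : j < n), i = j → l[i]'hi = l[j]'hj := by
    intro i j hi hj hij; subst hij; rfl
  have hlen : 0 < n := List.length_pos_of_mem (hmem s)
  have hlast : l[n-1]'(by omega) = s := by
    have h1' : q.support.tail.getLast (List.ne_nil_of_mem (hmem s)) = s := by
      rw [List.getLast_tail]
      exact q.getLast_support
    have h1 : l.getLast (List.ne_nil_of_mem (hmem s)) = s := h1'
    simp only [List.getLast_eq_getElem] at h1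
    exact h1
  have hchain : List.Chain' G.Adj l := by
    have := q.isChain_adj_support
    rw [q.support_eq_cons] at this
    exact this.tail
  have hadj : ∀ i (h : i + 1 < n), G.Adj (l[i]'(by omega)) (l[i+1]'h) := by
    have hc := List.isChain_iff_getElem.mp hchain
    intro i h
    have := hc i (by omega)
    simpa using this
  set H := G.induce (Sᶜ : Set V) with hH
  set F : H.ConnectedComponent → Finset ℕ :=
    fun C => (Finset.range n).filter
      (fun i => ∃ h : i < n, ∃ hm : l[i]'h ∈ (Sᶜ : Set V),
        H.connectedComponentMk ⟨l[i]'h, hm⟩ = C) with hF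
  have hne : ∀ C, (F C).Nonempty := by
    intro C
    obtain ⟨⟨v, hv⟩, hvC⟩ := C.exists_rep
    obtain ⟨i, hi, hiv⟩ := List.mem_iff_getElem.mp (hmem v)
    refine ⟨i, ?_⟩
    rw [hF]
    simp only [Finset.mem_filter, Finset.mem_range]
    refine ⟨hi, hi, ?_⟩
    subst hiv
    exact ⟨hv, hvC⟩
  set m : H.ConnectedComponent → ℕ := fun C => (F C).max' (hne C) with hm
  have hmP : ∀ C, ∃ h : m C < n, ∃ hmem : l[m C]'h ∈ (Sᶜ : Set V),
      H.connectedComponentMk ⟨l[m C]'h, hmem⟩ = C := by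
    intro C
    have h0 := Finset.mem_filter.mp ((F C).max'_mem (hne C))
    exact h0.2
  have hmlt : ∀ C, m C + 1 < n := by
    intro C
    obtain ⟨h, hmem', _⟩ := hmP C
    rcases Nat.lt_or_ge (m C + 1) n with h' | h'
    · exact h'
    · exfalso
      have he : l[m C]'h = l[n-1]'(by omega) := hgeq _ _ _ _ (by omega)
      rw [he, hlast] at hmem'
      exact hmem' hsS
  have hS' : ∀ C, l[m C + 1]'(hmlt C) ∈ S := by
    intro C
    by_contra hw
    obtain ⟨h, hmem', hCeq⟩ := hmP C
    have hw' : l[m C + 1]'(hmlt C) ∈ (Sᶜ : Set V) := hw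
    have hadj' : H.Adj ⟨l[m C]'h, hmem'⟩ ⟨l[m C + 1]'(hmlt C), hw'⟩ := by
      rw [hH]
      exact hadj (m C) (hmlt C)
    have hmem2 : m C + 1 ∈ F C := by
      rw [hF]
      simp only [Finset.mem_filter, Finset.mem_range]
      refine ⟨hmlt C, hmlt C, hw', ?_⟩
      have : H.connectedComponentMk ⟨l[m C + 1]'(hmlt C), hw'⟩
          = H.connectedComponentMk ⟨l[m C]'h, hmem'⟩ :=
        ConnectedComponent.eq.mpr hadj'.symm.reachable
      exact this.trans hCeq
    have hle : m C + 1 ≤ m C := (F C).le_max' _ hmem2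
    omega
  have hinj : Function.Injective (fun C : H.ConnectedComponent =>
      (⟨l[m C + 1]'(hmlt C), hS' C⟩ : S)) := by
    intro C C' hCC'
    simp only [Subtype.mk.injEq] at hCC'
    have h1 := hnodup.getElem_inj_iff.mp hCC'
    have h2 : m C = m C' := by omega
    obtain ⟨h, hmem', hCeq⟩ := hmP C
    obtain ⟨h', hmem'', hCeq'⟩ := hmP C'
    rw [← hCeq, ← hCeq']
    exact congrArg _ (Subtype.ext (hgeq _ _ _ _ h2))
  calc Nat.card H.ConnectedComponent ≤ Nat.card S := Nat.card_le_card_of_injective _ hinj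
    _ = S.ncard := Nat.card_coe_set_eq S

/-- If a 2-connected `K_{1,4}`-free split graph with `Δ^I = 2` contains a short
cycle `D`, then deleting `S = V(D) ∩ K` leaves more than `|S|` components, and
`G` is not Hamiltonian. -/
theorem shortCycle_not_hamiltonian [Fintype V] (G : SimpleGraph V)
    (K I : Set V) (hsplit : SplitPartition G K I) (hmax : MaxClique G K)
    (h2 : TwoConnected G) (hfree : StarFree G 4)
    (hub : ∀ v ∈ K, (G.neighborSet v ∩ I).ncard ≤ 2)
    (hex : ∃ v ∈ K, (G.neighborSet v ∩ I).ncard = 2)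
    (n : ℕ) (hn : 3 ≤ n) (f : cycleGraph n ↪g shortSub G I)
    (hmiss : ∃ k ∈ K, k ∉ Set.range ⇑f) :
    (Set.range ⇑f ∩ K).ncard <
      Nat.card ((G.induce ((Set.range ⇑f ∩ K)ᶜ : Set V)).ConnectedComponent) ∧
    ¬ HasHamCycle G := by
  classical
  obtain ⟨m3, rfl⟩ : ∃ m, n = m + 3 := ⟨n - 3, by omega⟩
  obtain ⟨hdisj, huniv, hclique, hindep⟩ := hsplit
  set S := Set.range ⇑f ∩ K with hS
  set A := Set.range ⇑f ∩ I with hA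
  have hKmem : ∀ x : V, x ∉ I → x ∈ K := by
    intro x hx
    have hKIu : x ∈ K ∪ I := huniv ▸ Set.mem_univ x
    rcases hKIu with h | h
    · exact h
    · exact absurd h hx
  have hKI : ∀ {x y : V}, x ∈ I → G.Adj x y → y ∈ K := by
    intro x y hx hadj
    refine hKmem y fun hy => hindep hx hy hadj
  have hnotI : ∀ {x : V}, x ∈ K → x ∉ I := fun hx hi => hdisj.ne_of_mem hx hi rfl
  -- adjacency along the cycle
  have hadjc : ∀ i : Fin (m3+3), (shortSub G I).Adj (f i) (f (i+1)) := by
    intro i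
    refine f.map_rel_iff.mpr ?_
    rw [cycleGraph_adj']
    right
    rw [add_sub_cancel_left]
    simp
  have hadjp : ∀ i : Fin (m3+3), (shortSub G I).Adj (f i) (f (i-1)) := by
    intro i
    refine f.map_rel_iff.mpr ?_
    rw [cycleGraph_adj']
    left
    rw [sub_sub_cancel]
    simp
  -- neighbor set of cycle vertices in I
  have hIprop : ∀ i : Fin (m3+3), f i ∈ I →
      G.neighborSet (f i) = {f (i-1), f (i+1)} := by
    intro i hi
    have h1 := hadjc i
    have h2' := hadjp i
    have hdeg : (G.neighborSet (f i)).ncard = 2 := by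
      rcases h1.2 with ⟨_, hd⟩ | ⟨hI2, _⟩
      · exact hd
      · exact absurd h1.1 (hindep hi hI2)
    have hsub : ({f (i-1), f (i+1)} : Set V) ⊆ G.neighborSet (f i) := by
      intro y hy
      rcases hy with rfl | rfl
      · exact h2'.1
      · exact h1.1
    refine (Set.eq_of_subset_of_ncard_le hsub ?_ (Set.toFinite _)).symm
    rw [hdeg, Set.ncard_pair (f.injective.ne (fin_succ_ne_pred m3 i).symm)]
  -- vertices of A are isolated after deleting S
  have hAiso : ∀ x ∈ A, ∀ y : V, G.Adj x y → y ∈ S := by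
    rintro x ⟨⟨i, rfl⟩, hxI⟩ y hadj
    have hy : y ∈ G.neighborSet (f i) := hadj
    rw [hIprop i hxI] at hy
    rcases hy with rfl | rfl
    · exact ⟨Set.mem_range_self _, hKI hxI (hadjp i).1⟩
    · exact ⟨Set.mem_range_self _, hKI hxI (hadjc i).1⟩
  -- |S| ≤ |A|
  have hSA : S.ncard ≤ A.ncard := by
    set g : V → V := fun x =>
      if h : ∃ j : Fin (m3+3), f j = x then f (h.choose + 1) else x with hg
    have hspec : ∀ x ∈ S, ∃ j : Fin (m3+3), f j = x ∧ g x = f (j + 1) ∧ f (j+1) ∈ A := by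
      rintro x ⟨⟨j, hj⟩, hxK⟩
      have hex' : ∃ j' : Fin (m3+3), f j' = x := ⟨j, hj⟩
      refine ⟨hex'.choose, hex'.choose_spec, ?_, ?_⟩
      · rw [hg]; simp only [dif_pos hex']
      · have hadj := hadjc hex'.choose
        rcases hadj.2 with ⟨hI1, _⟩ | ⟨hI2, _⟩
        · exact absurd (hex'.choose_spec ▸ hI1) (hnotI hxK)
        · exact ⟨Set.mem_range_self _, hI2⟩
    have hmaps : ∀ x ∈ S, g x ∈ A := by
      intro x hx
      obtain ⟨j, _, hgx, hmem⟩ := hspec x hx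
      rw [hgx]; exact hmem
    have hinj : Set.InjOn g S := by
      intro x hx x' hx' hxx'
      obtain ⟨j, hj, hgx, _⟩ := hspec x hx
      obtain ⟨j', hj', hgx', _⟩ := hspec x' hx'
      rw [hgx, hgx'] at hxx'
      have : j = j' := by
        have := f.injective hxx'
        exact add_right_cancel this
      rw [← hj, ← hj', this]
    exact Set.ncard_le_ncard_of_injOn g hmaps hinj (Set.toFinite A)
  -- the missed clique vertex
  obtain ⟨k, hkK, hknr⟩ := hmiss
  have hASc : A ⊆ (Sᶜ : Set V) := by
    rintro x ⟨hxr, hxI⟩ ⟨_, hxK⟩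
    exact hnotI hxK hxI
  have hkSc : k ∈ (Sᶜ : Set V) := fun ⟨hkr, _⟩ => hknr hkr
  have hkA : k ∉ A := fun ⟨hkr, _⟩ => hknr hkr
  set B : Set V := insert k A with hB
  have hBsub : B ⊆ (Sᶜ : Set V) := by
    rintro x (rfl | hx)
    · exact hkSc
    · exact hASc hx
  set H := G.induce (Sᶜ : Set V) with hH
  -- isolated vertices give singleton components
  have hiso : ∀ (x : V) (hx : x ∈ A) (hxc : x ∈ (Sᶜ : Set V)) (u : ↥(Sᶜ : Set V)),
      H.Reachable ⟨x, hxc⟩ u → u = ⟨x, hxc⟩ := by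
    intro x hx hxc u hre
    obtain ⟨w⟩ := hre
    cases w with
    | nil => rfl
    | cons hadj w' =>
      exfalso
      obtain ⟨y, hy⟩ : ∃ y : ↥(Sᶜ : Set V), H.Adj ⟨x, hxc⟩ y := ⟨_, hadj⟩
      exact y.2 (hAiso x hx y.1 hy)
  set φ : ↥B → H.ConnectedComponent :=
    fun b => H.connectedComponentMk ⟨b.1, hBsub b.2⟩ with hφ
  have hφinj : Function.Injective φ := by
    intro b b' hbb'
    rw [hφ] at hbb'
    have hre := SimpleGraph.ConnectedComponent.eq.mp hbb'
    have key : ∀ (c c' : ↥B), (c : V) ∈ A →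
        H.Reachable ⟨c.1, hBsub c.2⟩ ⟨c'.1, hBsub c'.2⟩ → c = c' := by
      intro c c' hcA hr
      have h := hiso c.1 hcA (hBsub c.2) ⟨c'.1, hBsub c'.2⟩ hr
      simp only [Subtype.mk.injEq] at h
      exact Subtype.ext h.symm
    rcases b.2 with hbk | hbA
    · rcases b'.2 with hbk' | hbA'
      · exact Subtype.ext (hbk.trans hbk'.symm)
      · exact (key b' b hbA' hre.symm).symm
    · exact key b b' hbA hre
  haveI : Finite H.ConnectedComponent := Quot.finite _
  have hcard1 : B.ncard ≤ Nat.card H.ConnectedComponent := by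
    have h1 := Nat.card_le_card_of_injective φ hφinj
    rwa [Nat.card_coe_set_eq] at h1
  have hBcard : B.ncard = A.ncard + 1 := Set.ncard_insert_of_notMem hkA (Set.toFinite A)
  have part1 : S.ncard < Nat.card H.ConnectedComponent := by omega
  refine ⟨part1, ?_⟩
  -- non-Hamiltonicity
  have hSne : S.Nonempty := by
    have hadj := hadjc 0
    rcases hadj.2 with ⟨hI1, _⟩ | ⟨hI2, _⟩
    · exact ⟨f (0 + 1), Set.mem_range_self _, hKI hI1 hadj.1⟩
    · exact ⟨f 0, Set.mem_range_self _, hKI hI2 hadj.1.symm⟩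
  rintro ⟨a, p, hp⟩
  have hle := @ham_comp_le V _ (Classical.decEq V) G a p hp S hSne
  rw [← hH] at hle
  omega
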